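/- The average two-party von Neumann entropy of |M₄⟩ equals E₂(|M₄⟩) = 1 + (1/2)log₂ 3 ≈ 1.7925. -/

import Mathlib

open scoped BigOperators
open Polynomial

/-- ω = exp(2πi/3), a primitive third root of unity. -/
noncomputable def omega : ℂ := Complex.exp (2 * Real.pi * Complex.I / 3)

/-- The four-qubit state |M₄⟩, given by its amplitudes in the computational basis. -/
noncomputable def M4 : Fin 2 → Fin 2 → Fin 2 → Fin 2 → ℂ := fun a b c d =>
  (Real.sqrt 6 : ℂ)⁻¹ *
    ((if (a, b, c, d) = (0, 0, 1, 1) ∨ (a, b, c, d) = (1, 1, 0, 0) then 1 else 0)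
      + omega * (if (a, b, c, d) = (0, 1, 0, 1) ∨ (a, b, c, d) = (1, 0, 1, 0) then 1 else 0)
      + (starRingEnd ℂ) omega *
          (if (a, b, c, d) = (0, 1, 1, 0) ∨ (a, b, c, d) = (1, 0, 0, 1) then 1 else 0))

/-- Reduced density matrix on qubits A,B (tracing out C,D), sesquilinear in two states. -/
noncomputable def redAB (ψ φ : Fin 2 → Fin 2 → Fin 2 → Fin 2 → ℂ) :
    Matrix (Fin 2 × Fin 2) (Fin 2 × Fin 2) ℂ := fun p q =>
  ∑ c : Fin 2, ∑ d : Fin 2, ψ p.1 p.2 c d * (starRingEnd ℂ) (φ q.1 q.2 c d)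

/-- Reduced density matrix on qubits A,C (tracing out B,D). -/
noncomputable def redAC (ψ φ : Fin 2 → Fin 2 → Fin 2 → Fin 2 → ℂ) :
    Matrix (Fin 2 × Fin 2) (Fin 2 × Fin 2) ℂ := fun p q =>
  ∑ b : Fin 2, ∑ d : Fin 2, ψ p.1 b p.2 d * (starRingEnd ℂ) (φ q.1 b q.2 d)

/-- Reduced density matrix on qubits A,D (tracing out B,C). -/
noncomputable def redAD (ψ φ : Fin 2 → Fin 2 → Fin 2 → Fin 2 → ℂ) :
    Matrix (Fin 2 × Fin 2) (Fin 2 × Fin 2) ℂ := fun p q =>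
  ∑ b : Fin 2, ∑ c : Fin 2, ψ p.1 b c p.2 * (starRingEnd ℂ) (φ q.1 b c q.2)

noncomputable def rhoAB (ψ : Fin 2 → Fin 2 → Fin 2 → Fin 2 → ℂ) := redAB ψ ψ
noncomputable def rhoAC (ψ : Fin 2 → Fin 2 → Fin 2 → Fin 2 → ℂ) := redAC ψ ψ
noncomputable def rhoAD (ψ : Fin 2 → Fin 2 → Fin 2 → Fin 2 → ℂ) := redAD ψ ψ

/-- The von Neumann entropy (in bits) of a Hermitian matrix, computed from its
eigenvalues, with the convention 0·log₂ 0 = 0 (as `Real.logb 2 0 = 0`). -/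
noncomputable def vonNeumannEntropy {n : Type*} [Fintype n] [DecidableEq n]
    {ρ : Matrix n n ℂ} (hρ : ρ.IsHermitian) : ℝ :=
  -∑ i, hρ.eigenvalues i * Real.logb 2 (hρ.eigenvalues i)

/-! ### Auxiliary lemmas -/

lemma omega_mul_conj : omega * (starRingEnd ℂ) omega = 1 := by
  rw [Complex.mul_conj]
  have h : ‖omega‖ = 1 := by simp [omega, Complex.norm_exp]
  have : Complex.normSq omega = 1 := by rw [← Complex.sq_norm, h]; norm_num
  rw [this]; norm_num

lemma omega_add_conj : omega + (starRingEnd ℂ) omega = -1 := by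
  have h : omega = Complex.exp ((2 * Real.pi / 3 : ℝ) * Complex.I) := by
    rw [omega]; push_cast; ring_nf
  have hre : omega.re = Real.cos (2 * Real.pi / 3) := by
    rw [h, Complex.exp_ofReal_mul_I_re]
  have hc : Real.cos (2 * Real.pi / 3) = -(1/2) := by
    have : (2 * Real.pi / 3 : ℝ) = Real.pi - Real.pi / 3 := by ring
    rw [this, Real.cos_pi_sub, Real.cos_pi_div_three]
  rw [Complex.add_conj, hre, hc]
  norm_num

lemma conj_omega_eq : (starRingEnd ℂ) omega = -1 - omega := by
  linear_combination omega_add_conj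

lemma omega_sq : omega * omega = -1 - omega := by
  have h := omega_mul_conj
  rw [conj_omega_eq] at h
  linear_combination -h

/-- The amplitude function of M4 without the normalization prefactor. -/
noncomputable def g : Fin 2 → Fin 2 → Fin 2 → Fin 2 → ℂ := fun a b c d =>
  ((if (a, b, c, d) = (0, 0, 1, 1) ∨ (a, b, c, d) = (1, 1, 0, 0) then 1 else 0)
      + omega * (if (a, b, c, d) = (0, 1, 0, 1) ∨ (a, b, c, d) = (1, 0, 1, 0) then 1 else 0)
      + (starRingEnd ℂ) omega *
          (if (a, b, c, d) = (0, 1, 1, 0) ∨ (a, b, c, d) = (1, 0, 0, 1) then 1 else 0))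

lemma M4_eq : M4 = fun a b c d => (Real.sqrt 6 : ℂ)⁻¹ * g a b c d := rfl

/-- The common reduced density matrix. -/
noncomputable def R : Matrix (Fin 2 × Fin 2) (Fin 2 × Fin 2) ℂ := fun p q =>
  if p = q then (if p.1 = p.2 then 1/6 else 1/3)
  else if p.1 ≠ p.2 ∧ q.1 ≠ q.2 then -(1/6) else 0

lemma redAB_smul (k : ℂ) (f : Fin 2 → Fin 2 → Fin 2 → Fin 2 → ℂ) :
    redAB (fun a b c d => k * f a b c d) (fun a b c d => k * f a b c d)
      = (k * (starRingEnd ℂ) k) • redAB f f := by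
  funext p q
  show ∑ c : Fin 2, ∑ d : Fin 2, (k * f p.1 p.2 c d) * (starRingEnd ℂ) (k * f q.1 q.2 c d)
      = (k * (starRingEnd ℂ) k) * ∑ c : Fin 2, ∑ d : Fin 2,
          f p.1 p.2 c d * (starRingEnd ℂ) (f q.1 q.2 c d)
  simp only [map_mul, Finset.mul_sum]
  exact Finset.sum_congr rfl fun c _ => Finset.sum_congr rfl fun d _ => by ring

lemma redAC_smul (k : ℂ) (f : Fin 2 → Fin 2 → Fin 2 → Fin 2 → ℂ) :
    redAC (fun a b c d => k * f a b c d) (fun a b c d => k * f a b c d)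
      = (k * (starRingEnd ℂ) k) • redAC f f := by
  funext p q
  show ∑ b : Fin 2, ∑ d : Fin 2, (k * f p.1 b p.2 d) * (starRingEnd ℂ) (k * f q.1 b q.2 d)
      = (k * (starRingEnd ℂ) k) * ∑ b : Fin 2, ∑ d : Fin 2,
          f p.1 b p.2 d * (starRingEnd ℂ) (f q.1 b q.2 d)
  simp only [map_mul, Finset.mul_sum]
  exact Finset.sum_congr rfl fun c _ => Finset.sum_congr rfl fun d _ => by ring

lemma redAD_smul (k : ℂ) (f : Fin 2 → Fin 2 → Fin 2 → Fin 2 → ℂ) :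
    redAD (fun a b c d => k * f a b c d) (fun a b c d => k * f a b c d)
      = (k * (starRingEnd ℂ) k) • redAD f f := by
  funext p q
  show ∑ b : Fin 2, ∑ c : Fin 2, (k * f p.1 b c p.2) * (starRingEnd ℂ) (k * f q.1 b c q.2)
      = (k * (starRingEnd ℂ) k) * ∑ b : Fin 2, ∑ c : Fin 2,
          f p.1 b c p.2 * (starRingEnd ℂ) (f q.1 b c q.2)
  simp only [map_mul, Finset.mul_sum]
  exact Finset.sum_congr rfl fun c _ => Finset.sum_congr rfl fun d _ => by ring

lemma sqrt6_fact : ((Real.sqrt 6 : ℂ))⁻¹ * (starRingEnd ℂ) ((Real.sqrt 6 : ℂ))⁻¹ = 1/6 := by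
  rw [map_inv₀, Complex.conj_ofReal, ← mul_inv]
  norm_cast
  rw [Real.mul_self_sqrt (by norm_num)]
  norm_num

lemma redAB_g : redAB g g = (6 : ℂ) • R := by
  ext ⟨a, b⟩ ⟨c, d⟩
  fin_cases a <;> fin_cases b <;> fin_cases c <;> fin_cases d <;>
    simp [redAB, g, R, Fin.sum_univ_two, conj_omega_eq, Prod.ext_iff] <;>
    first
      | ring1
      | linear_combination omega_sq
      | linear_combination (2 : ℂ) * omega_sq
      | linear_combination (-1 : ℂ) * omega_sq
      | linear_combination (-2 : ℂ) * omega_sq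

lemma redAC_g : redAC g g = (6 : ℂ) • R := by
  ext ⟨a, b⟩ ⟨c, d⟩
  fin_cases a <;> fin_cases b <;> fin_cases c <;> fin_cases d <;>
    simp [redAC, g, R, Fin.sum_univ_two, conj_omega_eq, Prod.ext_iff] <;>
    first
      | ring1
      | linear_combination omega_sq
      | linear_combination (2 : ℂ) * omega_sq
      | linear_combination (-1 : ℂ) * omega_sq
      | linear_combination (-2 : ℂ) * omega_sq

lemma redAD_g : redAD g g = (6 : ℂ) • R := by
  ext ⟨a, b⟩ ⟨c, d⟩
  fin_cases a <;> fin_cases b <;> fin_cases c <;> fin_cases d <;>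
    simp [redAD, g, R, Fin.sum_univ_two, conj_omega_eq, Prod.ext_iff] <;>
    first
      | ring1
      | linear_combination omega_sq
      | linear_combination (2 : ℂ) * omega_sq
      | linear_combination (-1 : ℂ) * omega_sq
      | linear_combination (-2 : ℂ) * omega_sq

lemma rhoAB_eq : rhoAB M4 = R := by
  rw [rhoAB, M4_eq, redAB_smul, sqrt6_fact, redAB_g, smul_smul]
  norm_num

lemma rhoAC_eq : rhoAC M4 = R := by
  rw [rhoAC, M4_eq, redAC_smul, sqrt6_fact, redAC_g, smul_smul]
  norm_num

lemma rhoAD_eq : rhoAD M4 = R := by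
  rw [rhoAD, M4_eq, redAD_smul, sqrt6_fact, redAD_g, smul_smul]
  norm_num

lemma R_quad : R * R = (2/3 : ℂ) • R - (1/12 : ℂ) • 1 := by
  ext ⟨a, b⟩ ⟨c, d⟩
  fin_cases a <;> fin_cases b <;> fin_cases c <;> fin_cases d <;>
    simp [Matrix.mul_apply, R, Fintype.sum_prod_type, Fin.sum_univ_two, Matrix.one_apply,
        Prod.ext_iff] <;> norm_num

lemma R_trace : Matrix.trace R = 1 := by
  simp [Matrix.trace, Matrix.diag, R, Fintype.sum_prod_type, Fin.sum_univ_two]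
  norm_num

/-- Trace of a Hermitian matrix is the sum of its eigenvalues. -/
lemma trace_eq_sum_eigs {n : Type*} [Fintype n] [DecidableEq n]
    {ρ : Matrix n n ℂ} (hρ : ρ.IsHermitian) :
    Matrix.trace ρ = ∑ i, (hρ.eigenvalues i : ℂ) := by
  conv_lhs => rw [hρ.spectral_theorem, Unitary.conjStarAlgAut_apply]
  rw [Matrix.trace_mul_cycle, Unitary.coe_star_mul_self, Matrix.one_mul, Matrix.trace_diagonal]
  rfl

open Matrix in
lemma eig_mem {ρ : Matrix (Fin 2 × Fin 2) (Fin 2 × Fin 2) ℂ} (hρ : ρ.IsHermitian)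
    (hq : ρ * ρ = (2/3 : ℂ) • ρ - (1/12 : ℂ) • 1) (i : Fin 2 × Fin 2) :
    hρ.eigenvalues i = 1/6 ∨ hρ.eigenvalues i = 1/2 := by
  set lam : ℝ := hρ.eigenvalues i with hlam
  have hv := hρ.mulVec_eigenvectorBasis i
  set v : (Fin 2 × Fin 2) → ℂ := ⇑(hρ.eigenvectorBasis i) with hvdef
  have hvne : v ≠ 0 := by
    intro h
    exact hρ.eigenvectorBasis.orthonormal.ne_zero i (by ext j; exact congrFun h j)
  have hv' : ρ *ᵥ v = (lam : ℂ) • v := by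
    rw [hv]; funext j; simp [Complex.real_smul, hlam]
  have h2 : (ρ * ρ) *ᵥ v = ((lam : ℂ) * lam) • v := by
    rw [← Matrix.mulVec_mulVec, hv', Matrix.mulVec_smul, hv', smul_smul]
  have h3 : (ρ * ρ) *ᵥ v = ((2/3 : ℂ) * lam - 1/12) • v := by
    rw [hq, Matrix.sub_mulVec, Matrix.smul_mulVec, Matrix.smul_mulVec, hv',
      Matrix.one_mulVec, smul_smul, sub_smul]
  have h4 : (((lam : ℂ) * lam) - ((2/3 : ℂ) * lam - 1/12)) • v = 0 := by
    rw [sub_smul, h2.symm.trans h3, sub_self]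
  rcases smul_eq_zero.mp h4 with h5 | h5
  · have h6 : ((lam * lam - (2/3 * lam - 1/12) : ℝ) : ℂ) = 0 := by
      push_cast
      linear_combination h5
    have h7 : lam * lam - (2/3 * lam - 1/12) = 0 := by exact_mod_cast h6
    have h8 : (lam - 1/6) * (lam - 1/2) = 0 := by linear_combination h7
    rcases mul_eq_zero.mp h8 with h | h
    · left; linarith
    · right; linarith
  · exact absurd h5 hvne

lemma sum4 (f : ℝ → ℝ) (a b c d : ℝ)
    (ha : a = 1/6 ∨ a = 1/2) (hb : b = 1/6 ∨ b = 1/2)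
    (hc : c = 1/6 ∨ c = 1/2) (hd : d = 1/6 ∨ d = 1/2)
    (hs : a + b + c + d = 1) :
    f a + f b + f c + f d = f (1/2) + 3 * f (1/6) := by
  rcases ha with ha | ha <;> rcases hb with hb | hb <;> rcases hc with hc | hc <;>
    rcases hd with hd | hd <;> subst_vars <;> first | ring1 | (norm_num at hs)

lemma entropy_of_R {ρ : Matrix (Fin 2 × Fin 2) (Fin 2 × Fin 2) ℂ} (hρ : ρ.IsHermitian)
    (heq : ρ = R) : vonNeumannEntropy hρ = 1 + (1/2) * Real.logb 2 3 := by
  have hq : ρ * ρ = (2/3 : ℂ) • ρ - (1/12 : ℂ) • 1 := by rw [heq]; exact R_quad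
  have htr : Matrix.trace ρ = 1 := by rw [heq]; exact R_trace
  have hmem := eig_mem hρ hq
  have hsumC : (∑ i, (hρ.eigenvalues i : ℂ)) = 1 := by rw [← trace_eq_sum_eigs]; exact htr
  have hsum : (∑ i, hρ.eigenvalues i) = 1 := by exact_mod_cast hsumC
  simp only [Fintype.sum_prod_type, Fin.sum_univ_two] at hsum
  have key : ∑ i, hρ.eigenvalues i * Real.logb 2 (hρ.eigenvalues i)
      = (1/2 : ℝ) * Real.logb 2 (1/2) + 3 * ((1/6 : ℝ) * Real.logb 2 (1/6)) := by
    simp only [Fintype.sum_prod_type, Fin.sum_univ_two]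
    linarith [sum4 (fun x => x * Real.logb 2 x) _ _ _ _
      (hmem (0, 0)) (hmem (0, 1)) (hmem (1, 0)) (hmem (1, 1)) (by linarith)]
  rw [vonNeumannEntropy, key]
  have h12 : Real.logb 2 (1/2 : ℝ) = -1 := by
    rw [show (1/2 : ℝ) = 2⁻¹ by norm_num, Real.logb_inv, Real.logb_self_eq_one] <;> norm_num
  have h16 : Real.logb 2 (1/6 : ℝ) = -(1 + Real.logb 2 3) := by
    rw [show (1/6 : ℝ) = 6⁻¹ by norm_num, Real.logb_inv,
      show (6 : ℝ) = 2 * 3 by norm_num, Real.logb_mul (by norm_num) (by norm_num),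
      Real.logb_self_eq_one] <;> norm_num
  rw [h12, h16]
  ring

/-- The average two-party von Neumann entropy of |M₄⟩ equals 1 + (1/2)·log₂ 3. -/
theorem M4_average_entropy
    (h1 : (rhoAB M4).IsHermitian) (h2 : (rhoAC M4).IsHermitian)
    (h3 : (rhoAD M4).IsHermitian) :
    (1/3 : ℝ) * (vonNeumannEntropy h1 + vonNeumannEntropy h2 + vonNeumannEntropy h3)
      = 1 + (1/2) * Real.logb 2 3 := by
  rw [entropy_of_R h1 rhoAB_eq, entropy_of_R h2 rhoAC_eq, entropy_of_R h3 rhoAD_eq]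
  ring
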